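/- Let μ, L > 0 with L ≥ μ, let n ≥ 1 be an integer, 0 < δ < 1/2 a real, and suppose κ = L/μ ≤ n^(1-2δ)/32. With η = 1/(16 n^δ L) and T = n, we have 1/(μη(1-4Lη)T) + 4Lη(T+1)/((1-4Lη)T) ≤ 2/n^δ. -/

import Mathlib

set_option maxHeartbeats 1000000


theorem dsvrg_contraction (L μ : ℝ) (n : ℕ) (δ : ℝ) (hμ : 0 < μ) (hμL : μ ≤ L)
    (hn : 1 ≤ n) (hδ0 : 0 < δ) (hδ1 : δ < 1 / 2)
    (hκ : L / μ ≤ (n : ℝ) ^ (1 - 2 * δ) / 32)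
    (η T : ℝ) (hη : η = 1 / (16 * (n : ℝ) ^ δ * L)) (hT : T = n) :
    1 / (μ * η * (1 - 4 * L * η) * T) + 4 * L * η * (T + 1) / ((1 - 4 * L * η) * T)
      ≤ 2 / (n : ℝ) ^ δ := by
  have hL : 0 < L := lt_of_lt_of_le hμ hμL
  have hnR : (1:ℝ) ≤ (n:ℝ) := by exact_mod_cast hn
  have hnpos : (0:ℝ) < (n:ℝ) := by linarith
  set a : ℝ := (n:ℝ) ^ δ with ha
  have ha1 : 1 ≤ a := Real.one_le_rpow hnR (le_of_lt hδ0)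
  have hapos : 0 < a := by linarith
  have hηpos : 0 < η := by rw [hη]; positivity
  have h4 : 4 * L * η = 1 / (4 * a) := by
    rw [hη]; field_simp; ring
  have haa : (n:ℝ) ^ (1 - 2*δ) * a * a = (n:ℝ) := by
    rw [ha, ← Real.rpow_add hnpos, ← Real.rpow_add hnpos,
      show (1:ℝ) - 2*δ + δ + δ = 1 by ring, Real.rpow_one]
  have hL' : L * 32 ≤ μ * ((n:ℝ) ^ (1 - 2*δ)) := by
    rw [div_le_div_iff₀ hμ (by norm_num : (0:ℝ) < 32)] at hκ
    linarith
  have hm : 2 * a ≤ μ * η * (n:ℝ) := by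
    rw [hη]
    rw [div_le_div_iff₀ hμ (by norm_num : (0:ℝ) < 32)] at hκ
    have h16 : (0:ℝ) < 16 * a * L := by positivity
    rw [mul_one_div, div_mul_eq_mul_div, le_div_iff₀ h16]
    nlinarith [haa, mul_le_mul_of_nonneg_left hL' (le_of_lt (mul_pos hapos hapos)),
      Real.rpow_pos_of_pos hnpos (1 - 2*δ)]
  have hD : (3:ℝ)/4 ≤ 1 - 4 * L * η := by
    rw [h4]
    have : 1 / (4 * a) ≤ 1 / 4 := by
      apply div_le_div_of_nonneg_left (by norm_num) (by norm_num) (by linarith)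
    linarith
  clear_value a
  rw [hT, h4]
  have hmpos : 0 < μ * η := mul_pos hμ hηpos
  have hden1 : (3:ℝ)/2 * a ≤ μ * η * (1 - 1/(4*a)) * (n:ℝ) := by
    nlinarith [hm, hD, mul_pos hmpos hnpos]
  have hden1pos : 0 < μ * η * (1 - 1/(4*a)) * (n:ℝ) := by nlinarith
  have t1 : 1 / (μ * η * (1 - 1/(4*a)) * (n:ℝ)) ≤ 2/(3*a) := by
    rw [div_le_div_iff₀ hden1pos (by positivity)]
    nlinarith [hden1]
  have hden2pos : 0 < (1 - 1/(4*a)) * (n:ℝ) := by nlinarith [hD, h4]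
  have t2 : 1/(4*a) * ((n:ℝ)+1) / ((1 - 1/(4*a)) * (n:ℝ)) ≤ 2/(3*a) := by
    rw [div_le_div_iff₀ hden2pos (by positivity)]
    have hinv : a * (1/(4*a)) = 1/4 := by field_simp
    have hb4 : 1/(4*a) ≤ 1/4 := by
      apply div_le_div_of_nonneg_left (by norm_num) (by norm_num) (by linarith)
    have hnb : (n:ℝ)*(1/(4*a)) ≤ (n:ℝ)*(1/4) :=
      mul_le_mul_of_nonneg_left hb4 (le_of_lt hnpos)
    have hinvn : (n:ℝ)*(a*(1/(4*a))) = (n:ℝ)*(1/4) := by rw [hinv]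
    nlinarith [hinv, hinvn, hnb, hnR]
  have hfin : 2/(3*a) + 2/(3*a) ≤ 2/a := by
    rw [← add_div, div_le_div_iff₀ (by positivity) hapos]
    nlinarith
  linarith
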